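/- Let l, m, k₁, k₂ be integers with |l| > m > 0, let d = gcd(l,m) divide both k₁ and k₂, and suppose (k₁ : ℚ)/k₂ = ε·((l:ℚ)/m)^p for some ε = ±1 and integer p ≠ 0. Then the groups G(l,m;k₁) = ⟨a,t ∣ t⁻¹a⁻ᵏ¹taˡt⁻¹aᵏ¹t = aᵐ⟩ and G(l,m;k₂) = ⟨a,t ∣ t⁻¹a⁻ᵏ²taˡt⁻¹aᵏ²t = aᵐ⟩ are isomorphic. -/

import Mathlib

/-- The relator `t⁻¹a⁻ᵏtaˡt⁻¹aᵏta⁻ᵐ` in the free group on `a` (= `of true`) and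
`t` (= `of false`). -/
def Grel (l m k : ℤ) : FreeGroup Bool :=
  (FreeGroup.of false)⁻¹ * (FreeGroup.of true) ^ (-k) * (FreeGroup.of false) *
    (FreeGroup.of true) ^ l * (FreeGroup.of false)⁻¹ * (FreeGroup.of true) ^ k *
    (FreeGroup.of false) * (FreeGroup.of true) ^ (-m)

/-- The one-relator group `G(l,m;k) = ⟨a, t ∣ t⁻¹a⁻ᵏtaˡt⁻¹aᵏt = aᵐ⟩`. -/
abbrev GG (l m k : ℤ) := PresentedGroup ({Grel l m k} : Set (FreeGroup Bool))

namespace GGaux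

section AuxGroup
variable {G : Type*} [Group G]

lemma lift_grel (l m k : ℤ) (A T : G) :
    FreeGroup.lift (fun x => if x then A else T) (Grel l m k) =
      T⁻¹ * A ^ (-k) * T * A ^ l * T⁻¹ * A ^ k * T * A ^ (-m) := by
  simp only [Grel, map_mul, map_inv, map_zpow, FreeGroup.lift_apply_of, Bool.false_eq_true, reduceIte]

lemma conj_conj (b x : G) (c : ℤ) : b⁻¹ * x ^ c * b = (b⁻¹ * x * b) ^ c := by
  simpa using (conj_zpow (i := c) (a := b⁻¹) (b := x)).symm

lemma conj_zpow_of {a b : G} {L M : ℤ} (h : b⁻¹ * a ^ L * b = a ^ M) (x : ℤ) :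
    b⁻¹ * a ^ (L * x) * b = a ^ (M * x) := by
  rw [zpow_mul a L x, zpow_mul a M x, conj_conj, h]

lemma chain {a b : G} {d l' m' : ℤ} (h : b⁻¹ * a ^ (d * l') * b = a ^ (d * m')) :
    ∀ (n : ℕ) (c : ℤ), (b ^ n)⁻¹ * a ^ (d * l' ^ n * c) * b ^ n = a ^ (d * m' ^ n * c)
  | 0, c => by simp
  | n + 1, c => by
    have e1 : d * l' ^ (n + 1) * c = d * l' ^ n * (l' * c) := by ring
    have e2 : d * m' ^ n * (l' * c) = d * l' * (m' ^ n * c) := by ring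
    have e3 : d * m' * (m' ^ n * c) = d * m' ^ (n + 1) * c := by ring
    calc (b ^ (n+1))⁻¹ * a ^ (d * l' ^ (n+1) * c) * b ^ (n+1)
        = b⁻¹ * ((b ^ n)⁻¹ * a ^ (d * l' ^ n * (l' * c)) * b ^ n) * b := by
          rw [← e1, pow_succ]; group
      _ = b⁻¹ * a ^ (d * l' * (m' ^ n * c)) * b := by rw [chain h n (l' * c), e2]
      _ = a ^ (d * m' ^ (n+1) * c) := by rw [conj_zpow_of h, e3]

/-- image of the relator of `G(l,m;k₁)` under `a ↦ a^ε, t ↦ b₂ⁿt` is trivial -/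
lemma kill₁ {a t b : G} {l m k₁ k₂ d l' m' c₁ c₂ ε : ℤ} (n : ℕ)
    (hb : b = t⁻¹ * a ^ k₂ * t)
    (hrel : b⁻¹ * a ^ (d * l') * b = a ^ (d * m'))
    (hl : l = d * l') (hm : m = d * m')
    (hk₁ : k₁ = d * l' ^ n * c₁) (hk₂ : k₂ = d * m' ^ n * c₂)
    (hc : c₂ = ε * c₁) :
    (b ^ n * t)⁻¹ * (a ^ ε) ^ (-k₁) * (b ^ n * t) * (a ^ ε) ^ l * (b ^ n * t)⁻¹ *
      (a ^ ε) ^ k₁ * (b ^ n * t) * (a ^ ε) ^ (-m) = 1 := by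
  have key : ∀ s : ℤ, (b ^ n * t)⁻¹ * (a ^ ε) ^ (s * k₁) * (b ^ n * t)
      = t⁻¹ * a ^ (s * k₂) * t := by
    intro s
    have e1 : ε * (s * k₁) = d * l' ^ n * (s * c₂) := by rw [hk₁, hc]; ring
    have e2 : d * m' ^ n * (s * c₂) = s * k₂ := by rw [hk₂]; ring
    calc (b ^ n * t)⁻¹ * (a ^ ε) ^ (s * k₁) * (b ^ n * t)
        = t⁻¹ * ((b ^ n)⁻¹ * a ^ (ε * (s * k₁)) * b ^ n) * t := by
          rw [← zpow_mul]; group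
      _ = t⁻¹ * a ^ (s * k₂) * t := by rw [e1, chain hrel n (s * c₂), e2]
  have k1 := key 1
  have k2 := key (-1)
  simp only [one_mul, neg_one_mul] at k1 k2
  have hrelε : b⁻¹ * a ^ (ε * l) * b = a ^ (ε * m) := by
    rw [hl, hm, mul_comm ε (d * l'), mul_comm ε (d * m')]
    exact conj_zpow_of hrel ε
  calc (b ^ n * t)⁻¹ * (a ^ ε) ^ (-k₁) * (b ^ n * t) * (a ^ ε) ^ l * (b ^ n * t)⁻¹ *
      (a ^ ε) ^ k₁ * (b ^ n * t) * (a ^ ε) ^ (-m)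
      = ((b ^ n * t)⁻¹ * (a ^ ε) ^ (-k₁) * (b ^ n * t)) * a ^ (ε * l) *
        ((b ^ n * t)⁻¹ * (a ^ ε) ^ k₁ * (b ^ n * t)) * a ^ (ε * -m) := by
        rw [← zpow_mul, ← zpow_mul]; group
    _ = (t⁻¹ * a ^ (-k₂) * t) * a ^ (ε * l) * (t⁻¹ * a ^ k₂ * t) * a ^ (ε * -m) := by
        rw [k1, k2]
    _ = b⁻¹ * a ^ (ε * l) * b * a ^ (ε * -m) := by rw [hb]; group
    _ = 1 := by rw [hrelε, show ε * -m = -(ε * m) by ring, zpow_neg, mul_inv_cancel]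

/-- image of the relator of `G(l,m;k₂)` under `a ↦ a^ε, t ↦ b₁⁻ⁿt` is trivial -/
lemma kill₂ {a t b : G} {l m k₁ k₂ d l' m' c₁ c₂ ε : ℤ} (n : ℕ)
    (hb : b = t⁻¹ * a ^ k₁ * t)
    (hrel : b⁻¹ * a ^ (d * l') * b = a ^ (d * m'))
    (hl : l = d * l') (hm : m = d * m')
    (hk₁ : k₁ = d * l' ^ n * c₁) (hk₂ : k₂ = d * m' ^ n * c₂)
    (hc : c₂ = ε * c₁) (hε : ε * ε = 1) :
    ((b ^ n)⁻¹ * t)⁻¹ * (a ^ ε) ^ (-k₂) * ((b ^ n)⁻¹ * t) * (a ^ ε) ^ l * ((b ^ n)⁻¹ * t)⁻¹ *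
      (a ^ ε) ^ k₂ * ((b ^ n)⁻¹ * t) * (a ^ ε) ^ (-m) = 1 := by
  have key : ∀ s : ℤ, ((b ^ n)⁻¹ * t)⁻¹ * (a ^ ε) ^ (s * k₂) * ((b ^ n)⁻¹ * t)
      = t⁻¹ * a ^ (s * k₁) * t := by
    intro s
    have e1 : s * k₁ = d * l' ^ n * (s * c₁) := by rw [hk₁]; ring
    have e2 : d * m' ^ n * (s * c₁) = ε * (s * k₂) := by
      rw [hk₂, hc]; linear_combination (-(s * (d * (m' ^ n * c₁)))) * hε
    have inner : b ^ n * a ^ (ε * (s * k₂)) * (b ^ n)⁻¹ = a ^ (s * k₁) := by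
      have h3 : (b ^ n)⁻¹ * a ^ (s * k₁) * b ^ n = a ^ (ε * (s * k₂)) := by
        rw [e1, chain hrel n (s * c₁), e2]
      rw [← h3]; group
    calc ((b ^ n)⁻¹ * t)⁻¹ * (a ^ ε) ^ (s * k₂) * ((b ^ n)⁻¹ * t)
        = t⁻¹ * (b ^ n * a ^ (ε * (s * k₂)) * (b ^ n)⁻¹) * t := by
          rw [← zpow_mul]; group
      _ = t⁻¹ * a ^ (s * k₁) * t := by rw [inner]
  have k1 := key 1
  have k2 := key (-1)
  simp only [one_mul, neg_one_mul] at k1 k2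
  have hrelε : b⁻¹ * a ^ (ε * l) * b = a ^ (ε * m) := by
    rw [hl, hm, mul_comm ε (d * l'), mul_comm ε (d * m')]
    exact conj_zpow_of hrel ε
  calc ((b ^ n)⁻¹ * t)⁻¹ * (a ^ ε) ^ (-k₂) * ((b ^ n)⁻¹ * t) * (a ^ ε) ^ l *
      ((b ^ n)⁻¹ * t)⁻¹ * (a ^ ε) ^ k₂ * ((b ^ n)⁻¹ * t) * (a ^ ε) ^ (-m)
      = (((b ^ n)⁻¹ * t)⁻¹ * (a ^ ε) ^ (-k₂) * ((b ^ n)⁻¹ * t)) * a ^ (ε * l) *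
        (((b ^ n)⁻¹ * t)⁻¹ * (a ^ ε) ^ k₂ * ((b ^ n)⁻¹ * t)) * a ^ (ε * -m) := by
        rw [← zpow_mul, ← zpow_mul]; group
    _ = (t⁻¹ * a ^ (-k₁) * t) * a ^ (ε * l) * (t⁻¹ * a ^ k₁ * t) * a ^ (ε * -m) := by
        rw [k1, k2]
    _ = b⁻¹ * a ^ (ε * l) * b * a ^ (ε * -m) := by rw [hb]; group
    _ = 1 := by rw [hrelε, show ε * -m = -(ε * m) by ring, zpow_neg, mul_inv_cancel]

lemma key₁ {a t b : G} {k₁ k₂ d l' m' c₁ c₂ ε : ℤ} (n : ℕ)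
    (hrel : b⁻¹ * a ^ (d * l') * b = a ^ (d * m'))
    (hk₁ : k₁ = d * l' ^ n * c₁) (hk₂ : k₂ = d * m' ^ n * c₂)
    (hc : c₂ = ε * c₁) :
    (b ^ n * t)⁻¹ * (a ^ ε) ^ k₁ * (b ^ n * t) = t⁻¹ * a ^ k₂ * t := by
  have e1 : ε * k₁ = d * l' ^ n * c₂ := by rw [hk₁, hc]; ring
  calc (b ^ n * t)⁻¹ * (a ^ ε) ^ k₁ * (b ^ n * t)
      = t⁻¹ * ((b ^ n)⁻¹ * a ^ (ε * k₁) * b ^ n) * t := by rw [← zpow_mul]; group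
    _ = t⁻¹ * a ^ k₂ * t := by rw [e1, chain hrel n c₂, ← hk₂]

lemma key₂ {a t b : G} {k₁ k₂ d l' m' c₁ c₂ ε : ℤ} (n : ℕ)
    (hrel : b⁻¹ * a ^ (d * l') * b = a ^ (d * m'))
    (hk₁ : k₁ = d * l' ^ n * c₁) (hk₂ : k₂ = d * m' ^ n * c₂)
    (hc : c₂ = ε * c₁) (hε : ε * ε = 1) :
    ((b ^ n)⁻¹ * t)⁻¹ * (a ^ ε) ^ k₂ * ((b ^ n)⁻¹ * t) = t⁻¹ * a ^ k₁ * t := by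
  have e2 : d * m' ^ n * c₁ = ε * k₂ := by
    rw [hk₂, hc]; linear_combination (-(d * (m' ^ n * c₁))) * hε
  have inner : b ^ n * a ^ (ε * k₂) * (b ^ n)⁻¹ = a ^ k₁ := by
    have h3 : (b ^ n)⁻¹ * a ^ k₁ * b ^ n = a ^ (ε * k₂) := by
      rw [hk₁, chain hrel n c₁, e2]
    rw [← h3]; group
  calc ((b ^ n)⁻¹ * t)⁻¹ * (a ^ ε) ^ k₂ * ((b ^ n)⁻¹ * t)
      = t⁻¹ * (b ^ n * a ^ (ε * k₂) * (b ^ n)⁻¹) * t := by rw [← zpow_mul]; group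
    _ = t⁻¹ * a ^ k₁ * t := by rw [inner]

end AuxGroup

lemma grel_one (l m k : ℤ) : (PresentedGroup.mk {Grel l m k} (Grel l m k) : GG l m k) = 1 :=
  (QuotientGroup.eq_one_iff _).mpr (Subgroup.subset_normalClosure rfl)

lemma relation (l m k : ℤ) :
    ((PresentedGroup.of false : GG l m k)⁻¹ * PresentedGroup.of true ^ k *
        PresentedGroup.of false)⁻¹ * PresentedGroup.of true ^ l *
      ((PresentedGroup.of false)⁻¹ * PresentedGroup.of true ^ k * PresentedGroup.of false) =
      PresentedGroup.of true ^ m := by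
  have h : (PresentedGroup.mk {Grel l m k}
      ((FreeGroup.of false)⁻¹ * (FreeGroup.of true) ^ (-k) * (FreeGroup.of false) *
        (FreeGroup.of true) ^ l * (FreeGroup.of false)⁻¹ * (FreeGroup.of true) ^ k *
        (FreeGroup.of false) * (FreeGroup.of true) ^ (-m)) : GG l m k) = 1 := grel_one l m k
  have hof : ∀ x : Bool,
      PresentedGroup.mk {Grel l m k} (FreeGroup.of x) = (PresentedGroup.of x : GG l m k) :=
    fun _ => rfl
  simp only [map_mul, map_inv, map_zpow, hof] at h
  set a : GG l m k := PresentedGroup.of true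
  set t : GG l m k := PresentedGroup.of false
  calc (t⁻¹ * a ^ k * t)⁻¹ * a ^ l * (t⁻¹ * a ^ k * t)
      = (t⁻¹ * a ^ (-k) * t * a ^ l * t⁻¹ * a ^ k * t * a ^ (-m)) * a ^ m := by group
    _ = a ^ m := by rw [h, one_mul]

theorem helper (l m k₁ k₂ d l' m' c₁ c₂ ε : ℤ) (n : ℕ)
    (hl : l = d * l') (hm : m = d * m')
    (hk₁ : k₁ = d * l' ^ n * c₁) (hk₂ : k₂ = d * m' ^ n * c₂)
    (hc : c₂ = ε * c₁) (hε : ε * ε = 1) :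
    Nonempty (GG l m k₁ ≃* GG l m k₂) := by
  subst hl; subst hm
  set a₁ : GG (d * l') (d * m') k₁ := PresentedGroup.of true with ha₁
  set t₁ : GG (d * l') (d * m') k₁ := PresentedGroup.of false with ht₁
  set a₂ : GG (d * l') (d * m') k₂ := PresentedGroup.of true with ha₂
  set t₂ : GG (d * l') (d * m') k₂ := PresentedGroup.of false with ht₂
  have hrel₁ : (t₁⁻¹ * a₁ ^ k₁ * t₁)⁻¹ * a₁ ^ (d * l') * (t₁⁻¹ * a₁ ^ k₁ * t₁)
      = a₁ ^ (d * m') := by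
    rw [ha₁, ht₁]; exact relation (d * l') (d * m') k₁
  have hrel₂ : (t₂⁻¹ * a₂ ^ k₂ * t₂)⁻¹ * a₂ ^ (d * l') * (t₂⁻¹ * a₂ ^ k₂ * t₂)
      = a₂ ^ (d * m') := by
    rw [ha₂, ht₂]; exact relation (d * l') (d * m') k₂
  have hφ : ∀ r ∈ ({Grel (d * l') (d * m') k₁} : Set (FreeGroup Bool)),
      FreeGroup.lift (fun x => if x then a₂ ^ ε else (t₂⁻¹ * a₂ ^ k₂ * t₂) ^ n * t₂) r = 1 := by
    intro r hr
    rw [Set.mem_singleton_iff] at hr; subst hr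
    rw [lift_grel]
    exact kill₁ n rfl hrel₂ rfl rfl hk₁ hk₂ hc
  have hψ : ∀ r ∈ ({Grel (d * l') (d * m') k₂} : Set (FreeGroup Bool)),
      FreeGroup.lift (fun x => if x then a₁ ^ ε else ((t₁⁻¹ * a₁ ^ k₁ * t₁) ^ n)⁻¹ * t₁) r
        = 1 := by
    intro r hr
    rw [Set.mem_singleton_iff] at hr; subst hr
    rw [lift_grel]
    exact kill₂ n rfl hrel₁ rfl rfl hk₁ hk₂ hc hε
  let φ : GG (d * l') (d * m') k₁ →* GG (d * l') (d * m') k₂ := PresentedGroup.toGroup hφ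
  let ψ : GG (d * l') (d * m') k₂ →* GG (d * l') (d * m') k₁ := PresentedGroup.toGroup hψ
  have eφa : φ a₁ = a₂ ^ ε := PresentedGroup.toGroup.of hφ
  have eφt : φ t₁ = (t₂⁻¹ * a₂ ^ k₂ * t₂) ^ n * t₂ := PresentedGroup.toGroup.of hφ
  have eψa : ψ a₂ = a₁ ^ ε := PresentedGroup.toGroup.of hψ
  have eψt : ψ t₂ = ((t₁⁻¹ * a₁ ^ k₁ * t₁) ^ n)⁻¹ * t₁ := PresentedGroup.toGroup.of hψ
  have eψb : ψ (t₂⁻¹ * a₂ ^ k₂ * t₂) = t₁⁻¹ * a₁ ^ k₁ * t₁ := by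
    rw [map_mul, map_mul, map_inv, map_zpow, eψt, eψa]
    exact key₂ n hrel₁ hk₁ hk₂ hc hε
  have eφb : φ (t₁⁻¹ * a₁ ^ k₁ * t₁) = t₂⁻¹ * a₂ ^ k₂ * t₂ := by
    rw [map_mul, map_mul, map_inv, map_zpow, eφt, eφa]
    exact key₁ n hrel₂ hk₁ hk₂ hc
  have h₁ : ψ.comp φ = MonoidHom.id (GG (d * l') (d * m') k₁) := by
    apply PresentedGroup.ext
    intro x
    simp only [MonoidHom.comp_apply, MonoidHom.id_apply]
    cases x with
    | true =>
      rw [← ha₁, eφa, map_zpow, eψa, ← zpow_mul, hε, zpow_one]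
    | false =>
      rw [← ht₁, eφt, map_mul, map_pow, eψb, eψt]
      group
  have h₂ : φ.comp ψ = MonoidHom.id (GG (d * l') (d * m') k₂) := by
    apply PresentedGroup.ext
    intro x
    simp only [MonoidHom.comp_apply, MonoidHom.id_apply]
    cases x with
    | true =>
      rw [← ha₂, eψa, map_zpow, eφa, ← zpow_mul, hε, zpow_one]
    | false =>
      rw [← ht₂, eψt, map_mul, map_inv, map_pow, eφb, eφt]
      group
  exact ⟨MonoidHom.toMulEquiv φ ψ h₁ h₂⟩

theorem helper2 (l m k₁ k₂ ε : ℤ) (n : ℕ)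
    (hl0 : l ≠ 0) (h2 : m > 0)
    (hk₁ : (Int.gcd l m : ℤ) ∣ k₁) (hk₂ : (Int.gcd l m : ℤ) ∣ k₂)
    (hε : ε * ε = 1)
    (hZ : k₁ * m ^ n = ε * (k₂ * l ^ n)) :
    Nonempty (GG l m k₁ ≃* GG l m k₂) := by
  set d : ℤ := (Int.gcd l m : ℤ) with hd
  have hdpos : 0 < d := by
    rw [hd]
    exact_mod_cast Int.gcd_pos_of_ne_zero_left m hl0
  have hd0 : d ≠ 0 := hdpos.ne'
  have hdl : d ∣ l := Int.gcd_dvd_left l m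
  have hdm : d ∣ m := Int.gcd_dvd_right l m
  obtain ⟨l', hl⟩ := hdl
  obtain ⟨m', hm⟩ := hdm
  obtain ⟨a₁, ha₁⟩ := hk₁
  obtain ⟨a₂, ha₂⟩ := hk₂
  have hm'0 : m' ≠ 0 := by rintro rfl; simp at hm; omega
  have hl'0 : l' ≠ 0 := by rintro rfl; simp at hl; exact hl0 hl
  have cop : IsCoprime l' m' := by
    rw [Int.isCoprime_iff_gcd_eq_one]
    have hgd := Int.gcd_div_gcd_div_gcd (i := l) (j := m) (Int.gcd_pos_of_ne_zero_left m hl0)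
    rw [← hd] at hgd
    have el' : l / d = l' := by
      conv_lhs => rw [hl]
      exact Int.mul_ediv_cancel_left l' hd0
    have em' : m / d = m' := by
      conv_lhs => rw [hm]
      exact Int.mul_ediv_cancel_left m' hd0
    rwa [el', em'] at hgd
  have copn : IsCoprime (l' ^ n) (m' ^ n) := (cop.pow : _)
  have hZ' : a₁ * m' ^ n = ε * (a₂ * l' ^ n) := by
    have h := hZ
    rw [ha₁, ha₂, hl, hm] at h
    have : d * d ^ n * (a₁ * m' ^ n) = d * d ^ n * (ε * (a₂ * l' ^ n)) := by
      ring_nf; ring_nf at h; linarith [h]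
    exact mul_left_cancel₀ (by positivity) this
  have hdvd₁ : l' ^ n ∣ a₁ := by
    have : l' ^ n ∣ a₁ * m' ^ n := ⟨ε * a₂, by linarith [hZ']⟩
    exact copn.dvd_of_dvd_mul_right this
  have hdvd₂ : m' ^ n ∣ a₂ := by
    have h1 : m' ^ n ∣ ε * (a₂ * l' ^ n) := ⟨a₁, by linarith [hZ']⟩
    have h2' : m' ^ n ∣ a₂ * l' ^ n := by
      have h3 := h1.mul_left ε
      have hee : ε * (ε * (a₂ * l' ^ n)) = a₂ * l' ^ n := by
        rw [← mul_assoc, hε, one_mul]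
      rwa [hee] at h3
    exact copn.symm.dvd_of_dvd_mul_right h2'
  obtain ⟨c₁, hc₁⟩ := hdvd₁
  obtain ⟨c₂, hc₂⟩ := hdvd₂
  have hcc : c₂ = ε * c₁ := by
    have h := hZ'
    rw [hc₁, hc₂] at h
    have h' : (l' ^ n * m' ^ n) * c₁ = (l' ^ n * m' ^ n) * (ε * c₂) := by
      ring_nf; ring_nf at h; linarith
    have h'' := mul_left_cancel₀ (mul_ne_zero (pow_ne_zero n hl'0) (pow_ne_zero n hm'0)) h'
    have h3 := congrArg (ε * ·) h''
    simpa [← mul_assoc, hε] using h3.symm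
  exact helper l m k₁ k₂ d l' m' c₁ c₂ ε n hl hm
    (by rw [ha₁, hc₁]; ring) (by rw [ha₂, hc₂]; ring) hcc hε

end GGaux

theorem stmt_10 (l m k₁ k₂ ε p : ℤ)
    (h1 : |l| > m) (h2 : m > 0)
    (hk₁ : (Int.gcd l m : ℤ) ∣ k₁) (hk₂ : (Int.gcd l m : ℤ) ∣ k₂)
    (hε : ε = 1 ∨ ε = -1) (hp : p ≠ 0)
    (he : (k₁ : ℚ) / k₂ = ε * ((l : ℚ) / m) ^ p) :
    Nonempty (GG l m k₁ ≃* GG l m k₂) := by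
  have hl0 : l ≠ 0 := by intro h; rw [h, abs_zero] at h1; omega
  have hεε : ε * ε = 1 := by rcases hε with rfl | rfl <;> norm_num
  have hεQ : (ε : ℚ) ≠ 0 := by rcases hε with rfl | rfl <;> norm_num
  have hεQ1 : (ε : ℚ) * ε = 1 := by exact_mod_cast hεε
  have hmQ : (m : ℚ) ≠ 0 := by
    have : (0:ℚ) < m := by exact_mod_cast h2
    exact this.ne'
  have hlQ : (l : ℚ) ≠ 0 := by exact_mod_cast hl0
  have hbase : (l : ℚ) / m ≠ 0 := div_ne_zero hlQ hmQ
  have hrhs : (ε : ℚ) * ((l : ℚ) / m) ^ p ≠ 0 := mul_ne_zero hεQ (zpow_ne_zero p hbase)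
  have hk₂Q : (k₂ : ℚ) ≠ 0 := by
    intro h
    rw [h, div_zero] at he
    exact hrhs he.symm
  have hk1eq : (k₁ : ℚ) = (ε * ((l : ℚ) / m) ^ p) * k₂ := (div_eq_iff hk₂Q).mp he
  rcases lt_or_gt_of_ne hp with hneg | hpos
  · -- p < 0 : symmetric case
    set n : ℕ := (-p).toNat with hn
    have hpn : p = -(n : ℤ) := by rw [hn]; omega
    have hQ : (k₂ : ℚ) * m ^ n = ε * (k₁ * l ^ n) := by
      rw [hk1eq, hpn, zpow_neg, zpow_natCast, div_pow]
      have hlpow : ((l : ℚ)) ^ n ≠ 0 := pow_ne_zero _ hlQ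
      have hmpow : ((m : ℚ)) ^ n ≠ 0 := pow_ne_zero _ hmQ
      field_simp
      linear_combination (-1 : ℚ) * hεQ1
    have hZ : k₂ * m ^ n = ε * (k₁ * l ^ n) := by exact_mod_cast hQ
    obtain ⟨e⟩ := GGaux.helper2 l m k₂ k₁ ε n hl0 h2 hk₂ hk₁ hεε hZ
    exact ⟨e.symm⟩
  · set n : ℕ := p.toNat with hn
    have hpn : p = (n : ℤ) := by rw [hn]; omega
    have hQ : (k₁ : ℚ) * m ^ n = ε * (k₂ * l ^ n) := by
      rw [hk1eq, hpn, zpow_natCast, div_pow]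
      field_simp
    have hZ : k₁ * m ^ n = ε * (k₂ * l ^ n) := by exact_mod_cast hQ
    obtain ⟨e⟩ := GGaux.helper2 l m k₁ k₂ ε n hl0 h2 hk₁ hk₂ hεε hZ
    exact ⟨e⟩
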